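/- R_Cfg is a bisimulation between the CES and CESH machines; consequently, for every related pair of configurations, the CES configuration terminates with a natural number value nat n if and only if the related CESH configuration terminates with nat n, and the CES configuration diverges if and only if the CESH configuration diverges. Moreover, for any code c, the initial configurations (c, [], []) and (c, [], [], ∅) are related by R_Cfg. -/

import Mathlib

mutual
inductive Instr : Type where
  | var : Nat → Instr
  | clos : Code → Instr
  | appl : Instr
  | lit : Nat → Instr
  | op : (Nat → Nat → Nat) → Instr
inductive Code : Type where
  | seq : Instr → Code → Code
  | cond : Code → Code → Code
  | END : Code
  | RET : Code
end

namespace CES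

inductive Value : Type where
  | nat : Nat → Value
  | clos : Code → List Value → Value

abbrev Env := List Value

inductive StackElem : Type where
  | val : Value → StackElem
  | cont : Code → Env → StackElem

abbrev Stack := List StackElem
abbrev Config := Code × Env × Stack

/-- The CES machine transition relation. -/
inductive Step : Config → Config → Prop where
  | var {n : Nat} {c : Code} {e : Env} {s : Stack} {v : Value} :
      e[n]? = some v →
      Step (.seq (.var n) c, e, s) (c, e, .val v :: s)
  | clos {c' c : Code} {e : Env} {s : Stack} :
      Step (.seq (.clos c') c, e, s) (c, e, .val (.clos c' e) :: s)
  | appl {c c' : Code} {e e' : Env} {v : Value} {s : Stack} :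
      Step (.seq .appl c, e, .val v :: .val (.clos c' e') :: s)
           (c', v :: e', .cont c e :: s)
  | ret {c : Code} {e e' : Env} {v : Value} {s : Stack} :
      Step (.RET, e, .val v :: .cont c e' :: s) (c, e', .val v :: s)
  | lit {n : Nat} {c : Code} {e : Env} {s : Stack} :
      Step (.seq (.lit n) c, e, s) (c, e, .val (.nat n) :: s)
  | op {f : Nat → Nat → Nat} {c : Code} {e : Env} {n₁ n₂ : Nat} {s : Stack} :
      Step (.seq (.op f) c, e, .val (.nat n₁) :: .val (.nat n₂) :: s)
           (c, e, .val (.nat (f n₁ n₂)) :: s)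
  | cond0 {c c' : Code} {e : Env} {s : Stack} :
      Step (.cond c c', e, .val (.nat 0) :: s) (c, e, s)
  | condS {c c' : Code} {e : Env} {n : Nat} {s : Stack} :
      Step (.cond c c', e, .val (.nat (n+1)) :: s) (c', e, s)

end CES

namespace CESH

abbrev Ptr : Type := Nat

inductive Value : Type where
  | nat : Nat → Value
  | clos : Ptr → Value

abbrev Env := List Value
abbrev Closure := Code × Env

inductive StackElem : Type where
  | val : Value → StackElem
  | cont : Closure → StackElem

abbrev Stack := List StackElem
abbrev Heap := List Closure
abbrev Config := Code × Env × Stack × Heap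

/-- The CESH machine transition relation, with a list-based heap. -/
inductive Step : Config → Config → Prop where
  | var {n : Nat} {c : Code} {e : Env} {s : Stack} {h : Heap} {v : Value} :
      e[n]? = some v →
      Step (.seq (.var n) c, e, s, h) (c, e, .val v :: s, h)
  | clos {c' c : Code} {e : Env} {s : Stack} {h : Heap} :
      Step (.seq (.clos c') c, e, s, h)
           (c, e, .val (.clos h.length) :: s, h ++ [(c', e)])
  | appl {c c' : Code} {e e' : Env} {v : Value} {ptr : Ptr} {s : Stack} {h : Heap} :
      h[ptr]? = some (c', e') →
      Step (.seq .appl c, e, .val v :: .val (.clos ptr) :: s, h)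
           (c', v :: e', .cont (c, e) :: s, h)
  | ret {c : Code} {e e' : Env} {v : Value} {s : Stack} {h : Heap} :
      Step (.RET, e, .val v :: .cont (c, e') :: s, h) (c, e', .val v :: s, h)
  | lit {n : Nat} {c : Code} {e : Env} {s : Stack} {h : Heap} :
      Step (.seq (.lit n) c, e, s, h) (c, e, .val (.nat n) :: s, h)
  | op {f : Nat → Nat → Nat} {c : Code} {e : Env} {n₁ n₂ : Nat} {s : Stack} {h : Heap} :
      Step (.seq (.op f) c, e, .val (.nat n₁) :: .val (.nat n₂) :: s, h)
           (c, e, .val (.nat (f n₁ n₂)) :: s, h)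
  | cond0 {c c' : Code} {e : Env} {s : Stack} {h : Heap} :
      Step (.cond c c', e, .val (.nat 0) :: s, h) (c, e, s, h)
  | condS {c c' : Code} {e : Env} {n : Nat} {s : Stack} {h : Heap} :
      Step (.cond c c', e, .val (.nat (n+1)) :: s, h) (c', e, s, h)

end CESH

mutual
/-- Relation between CES values and CESH values, parameterised by the CESH heap:
equal naturals are related, and a CES closure is related to a pointer that
dereferences to a componentwise-related CESH closure. -/
inductive RVal (h : CESH.Heap) : CES.Value → CESH.Value → Prop where
  | nat {n : Nat} : RVal h (.nat n) (.nat n)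
  | clos {c : Code} {e₁ : CES.Env} {e₂ : CESH.Env} {ptr : CESH.Ptr} :
      h[ptr]? = some (c, e₂) → REnv h e₁ e₂ → RVal h (.clos c e₁) (.clos ptr)
/-- Pointwise relation between CES and CESH environments. -/
inductive REnv (h : CESH.Heap) : CES.Env → CESH.Env → Prop where
  | nil : REnv h [] []
  | cons {v₁ : CES.Value} {e₁ : CES.Env} {v₂ : CESH.Value} {e₂ : CESH.Env} :
      RVal h v₁ v₂ → REnv h e₁ e₂ → REnv h (v₁ :: e₁) (v₂ :: e₂)
end

/-- Relation between CES closures and CESH closures: equal code, related environments. -/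
def RClos (h : CESH.Heap) (cl₁ : Code × CES.Env) (cl₂ : CESH.Closure) : Prop :=
  cl₁.1 = cl₂.1 ∧ REnv h cl₁.2 cl₂.2

/-- Relation between CES and CESH stack elements. -/
inductive RStackElem (h : CESH.Heap) : CES.StackElem → CESH.StackElem → Prop where
  | val {v₁ : CES.Value} {v₂ : CESH.Value} :
      RVal h v₁ v₂ → RStackElem h (.val v₁) (.val v₂)
  | cont {c : Code} {e₁ : CES.Env} {e₂ : CESH.Env} :
      REnv h e₁ e₂ → RStackElem h (.cont c e₁) (.cont (c, e₂))

/-- Pointwise relation between stacks. -/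
def RStack (h : CESH.Heap) : CES.Stack → CESH.Stack → Prop :=
  List.Forall₂ (RStackElem h)

/-- The relation between CES and CESH configurations. -/
def RCfg : CES.Config → CESH.Config → Prop :=
  fun cfg₁ cfg₂ =>
    match cfg₁, cfg₂ with
    | (c₁, e₁, s₁), (c₂, e₂, s₂, h) => c₁ = c₂ ∧ REnv h e₁ e₂ ∧ RStack h s₁ s₂

def Simulation {A B : Type*} (step : A → A → Prop) (step' : B → B → Prop)
    (R : A → B → Prop) : Prop :=
  ∀ a a' b, step a a' → R a b → ∃ b', step' b b' ∧ R a' b'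

/-- CES termination with the value `nat n`. -/
def DownCES (cfg : CES.Config) (n : Nat) : Prop :=
  Relation.ReflTransGen CES.Step cfg (Code.END, [], [CES.StackElem.val (.nat n)])

/-- CESH termination with the value `nat n` (with any final heap). -/
def DownCESH (cfg : CESH.Config) (n : Nat) : Prop :=
  ∃ h, Relation.ReflTransGen CESH.Step cfg (Code.END, [], [CESH.StackElem.val (.nat n)], h)

/-- Divergence: another step is possible from every reachable configuration. -/
def Diverges {A : Type*} (step : A → A → Prop) (a : A) : Prop :=
  ∀ b, Relation.ReflTransGen step a b → ∃ c, step b c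


section Aux

theorem get?_append_of_get? {α : Type*} {l l' : List α} :
    ∀ {n : Nat} {a : α}, l[n]? = some a → (l ++ l')[n]? = some a := by
  induction l with
  | nil => intro n a h; simp at h
  | cons x xs ih => intro n a h; cases n <;> simp_all

mutual
theorem RVal.mono {h h' : CESH.Heap} :
    ∀ {v₁ v₂}, RVal h v₁ v₂ → RVal (h ++ h') v₁ v₂
  | _, _, .nat => .nat
  | _, _, .clos hget henv => .clos (get?_append_of_get? hget) (REnv.mono henv)
theorem REnv.mono {h h' : CESH.Heap} :
    ∀ {e₁ e₂}, REnv h e₁ e₂ → REnv (h ++ h') e₁ e₂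
  | _, _, .nil => .nil
  | _, _, .cons hv he => .cons (RVal.mono hv) (REnv.mono he)
end

theorem RStackElem.mono {h h' : CESH.Heap} {x₁ x₂} (hx : RStackElem h x₁ x₂) :
    RStackElem (h ++ h') x₁ x₂ := by
  cases hx with
  | val hv => exact .val hv.mono
  | cont he => exact .cont he.mono

theorem RStack.mono {h h' : CESH.Heap} {s₁ s₂} (hs : RStack h s₁ s₂) :
    RStack (h ++ h') s₁ s₂ :=
  hs.imp fun _ _ hx => hx.mono

theorem REnv_get?₁ {h : CESH.Heap} :
    ∀ {e₁ e₂}, REnv h e₁ e₂ →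
      ∀ {n : Nat} {v₁}, e₁[n]? = some v₁ → ∃ v₂, e₂[n]? = some v₂ ∧ RVal h v₁ v₂ := by
  intro e₁
  induction e₁ with
  | nil => rintro e₂ he n v₁ hg; simp at hg
  | cons x xs ih =>
    rintro e₂ (_ | ⟨hv, he⟩) n v₁ hg
    cases n with
    | zero => simp only [List.getElem?_cons_zero] at hg; injection hg with hg; subst hg; exact ⟨_, rfl, hv⟩
    | succ m => exact ih he hg

theorem REnv_get?₂ {h : CESH.Heap} :
    ∀ {e₁ e₂}, REnv h e₁ e₂ →
      ∀ {n : Nat} {v₂}, e₂[n]? = some v₂ → ∃ v₁, e₁[n]? = some v₁ ∧ RVal h v₁ v₂ := by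
  intro e₁
  induction e₁ with
  | nil => rintro e₂ (_|_) n v₂ hg; simp at hg
  | cons x xs ih =>
    rintro e₂ (_ | ⟨hv, he⟩) n v₂ hg
    cases n with
    | zero => simp only [List.getElem?_cons_zero] at hg; injection hg with hg; subst hg; exact ⟨_, rfl, hv⟩
    | succ m => exact ih he hg

theorem fwd_sim : Simulation CES.Step CESH.Step RCfg := by
  rintro ⟨c₁, e₁, s₁⟩ a' ⟨c₂, e₂, s₂, h⟩ hstep ⟨rfl, henv, hstk⟩
  cases hstep with
  | var hget =>
    obtain ⟨v₂, hget₂, hr⟩ := REnv_get?₁ henv hget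
    exact ⟨_, .var hget₂, rfl, henv, .cons (.val hr) hstk⟩
  | clos =>
    exact ⟨_, .clos, rfl, henv.mono,
      .cons (.val (.clos (List.getElem?_concat_length) henv.mono)) hstk.mono⟩
  | appl =>
    rcases hstk with _ | ⟨hx, hstk⟩
    rcases hstk with _ | ⟨hy, hstk⟩
    rcases hx with ⟨hv⟩
    rcases hy with ⟨hw⟩
    rcases hw with _ | ⟨hget, henv'⟩
    exact ⟨_, .appl hget, rfl, .cons hv henv', .cons (.cont henv) hstk⟩
  | ret =>
    rcases hstk with _ | ⟨hx, hstk⟩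
    rcases hstk with _ | ⟨hy, hstk⟩
    rcases hx with ⟨hv⟩
    rcases hy with _ | ⟨he2⟩
    exact ⟨_, .ret, rfl, he2, .cons (.val hv) hstk⟩
  | lit => exact ⟨_, .lit, rfl, henv, .cons (.val .nat) hstk⟩
  | op =>
    rcases hstk with _ | ⟨hx, hstk⟩
    rcases hstk with _ | ⟨hy, hstk⟩
    rcases hx with ⟨hv⟩; rcases hy with ⟨hw⟩
    cases hv; cases hw
    exact ⟨_, .op, rfl, henv, .cons (.val .nat) hstk⟩
  | cond0 =>
    rcases hstk with _ | ⟨hx, hstk⟩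
    rcases hx with ⟨hv⟩; cases hv
    exact ⟨_, .cond0, rfl, henv, hstk⟩
  | condS =>
    rcases hstk with _ | ⟨hx, hstk⟩
    rcases hx with ⟨hv⟩; cases hv
    exact ⟨_, .condS, rfl, henv, hstk⟩

theorem bwd_sim : Simulation CESH.Step CES.Step (fun cfg₂ cfg₁ => RCfg cfg₁ cfg₂) := by
  rintro ⟨c₂, e₂, s₂, h⟩ a' ⟨c₁, e₁, s₁⟩ hstep ⟨rfl, henv, hstk⟩
  cases hstep with
  | var hget =>
    obtain ⟨v₁, hget₁, hr⟩ := REnv_get?₂ henv hget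
    exact ⟨_, .var hget₁, rfl, henv, .cons (.val hr) hstk⟩
  | clos =>
    exact ⟨_, .clos, rfl, henv.mono,
      .cons (.val (.clos (List.getElem?_concat_length) henv.mono)) hstk.mono⟩
  | appl hget =>
    rcases hstk with _ | ⟨hx, hstk⟩
    rcases hstk with _ | ⟨hy, hstk⟩
    rcases hx with ⟨hv⟩
    rcases hy with ⟨hw⟩
    rcases hw with _ | ⟨hget', henv'⟩
    rw [hget'] at hget
    injection hget with hget
    injection hget with h1 h2
    subst h1; subst h2
    exact ⟨_, .appl, rfl, .cons hv henv', .cons (.cont henv) hstk⟩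
  | ret =>
    rcases hstk with _ | ⟨hx, hstk⟩
    rcases hstk with _ | ⟨hy, hstk⟩
    rcases hx with ⟨hv⟩
    rcases hy with _ | ⟨he2⟩
    exact ⟨_, .ret, rfl, he2, .cons (.val hv) hstk⟩
  | lit => exact ⟨_, .lit, rfl, henv, .cons (.val .nat) hstk⟩
  | op =>
    rcases hstk with _ | ⟨hx, hstk⟩
    rcases hstk with _ | ⟨hy, hstk⟩
    rcases hx with ⟨hv⟩; rcases hy with ⟨hw⟩
    cases hv; cases hw
    exact ⟨_, .op, rfl, henv, .cons (.val .nat) hstk⟩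
  | cond0 =>
    rcases hstk with _ | ⟨hx, hstk⟩
    rcases hx with ⟨hv⟩; cases hv
    exact ⟨_, .cond0, rfl, henv, hstk⟩
  | condS =>
    rcases hstk with _ | ⟨hx, hstk⟩
    rcases hx with ⟨hv⟩; cases hv
    exact ⟨_, .condS, rfl, henv, hstk⟩

theorem sim_star {A B : Type*} {step : A → A → Prop} {step' : B → B → Prop}
    {R : A → B → Prop} (hs : Simulation step step' R) :
    ∀ {a a'}, Relation.ReflTransGen step a a' →
      ∀ {b}, R a b → ∃ b', Relation.ReflTransGen step' b b' ∧ R a' b' := by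
  intro a a' hst
  induction hst with
  | refl => intro b hR; exact ⟨b, .refl, hR⟩
  | tail _ h₂ ih =>
    intro b hR
    obtain ⟨b', hb', hR'⟩ := ih hR
    obtain ⟨b'', hb'', hR''⟩ := hs _ _ _ h₂ hR'
    exact ⟨b'', hb'.tail hb'', hR''⟩

end Aux

/-- `RCfg` is a bisimulation between the CES and CESH machines; consequently
related configurations agree on termination with natural number values and on
divergence; moreover initial configurations are related (∅ = [] is the empty heap). -/
theorem RCfg_bisimulation :
    (Simulation CES.Step CESH.Step RCfg ∧
     Simulation CESH.Step CES.Step (fun cfg₂ cfg₁ => RCfg cfg₁ cfg₂)) ∧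
    (∀ (cfg₁ : CES.Config) (cfg₂ : CESH.Config) (n : Nat), RCfg cfg₁ cfg₂ →
      (DownCES cfg₁ n ↔ DownCESH cfg₂ n)) ∧
    (∀ (cfg₁ : CES.Config) (cfg₂ : CESH.Config), RCfg cfg₁ cfg₂ →
      (Diverges CES.Step cfg₁ ↔ Diverges CESH.Step cfg₂)) ∧
    (∀ c : Code, RCfg (c, [], []) (c, [], [], [])) := by
  refine ⟨⟨fwd_sim, bwd_sim⟩, ?_, ?_, ?_⟩
  · intro cfg₁ cfg₂ n hR
    constructor
    · intro hdown
      obtain ⟨b₂, hsteps, hR'⟩ := sim_star fwd_sim hdown hR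
      obtain ⟨c, e, s, h⟩ := b₂
      obtain ⟨rfl, henv, hstk⟩ := hR'
      cases henv
      rcases hstk with _ | ⟨hx, hstk⟩
      rcases hstk
      rcases hx with ⟨hv⟩; cases hv
      exact ⟨h, hsteps⟩
    · rintro ⟨h, hsteps⟩
      obtain ⟨b₁, hsteps₁, hR'⟩ := sim_star bwd_sim hsteps hR
      obtain ⟨c, e, s⟩ := b₁
      obtain ⟨rfl, henv, hstk⟩ := hR'
      cases henv
      rcases hstk with _ | ⟨hx, hstk⟩
      rcases hstk
      rcases hx with ⟨hv⟩; cases hv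
      exact hsteps₁
  · intro cfg₁ cfg₂ hR
    constructor
    · intro hdiv b₂ hsteps
      obtain ⟨b₁, hsteps₁, hR'⟩ := sim_star bwd_sim hsteps hR
      obtain ⟨c₁', hstep⟩ := hdiv b₁ hsteps₁
      obtain ⟨c₂', hstep₂, _⟩ := fwd_sim _ _ _ hstep hR'
      exact ⟨c₂', hstep₂⟩
    · intro hdiv b₁ hsteps
      obtain ⟨b₂, hsteps₂, hR'⟩ := sim_star fwd_sim hsteps hR
      obtain ⟨c₂', hstep⟩ := hdiv b₂ hsteps₂
      obtain ⟨c₁', hstep₁, _⟩ := bwd_sim _ _ _ hstep hR'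
      exact ⟨c₁', hstep₁⟩
  · intro c
    exact ⟨rfl, .nil, List.Forall₂.nil⟩
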